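/- For p ∈ (-∞,-1] ∪ [0,∞), the inequality (2 + (1+3p)cosh t)/(3 + p + 2p·cosh t) < sinh t / t holds for all t ∈ (0,∞) if and only if p ∈ (-∞,-1] ∪ [1/9,∞); and the reverse inequality holds for all t > 0 if and only if p = 0. -/

import Mathlib

open Real

noncomputable def FS (a b d t : ℝ) : ℝ :=
  a * Real.sinh t + b * Real.sinh (2*t) + d * (t * Real.cosh t)

noncomputable def FC (a b c d t : ℝ) : ℝ :=
  a * Real.cosh t + b * Real.cosh (2*t) + c + d * (t * Real.sinh t)

lemma hasDerivAt_sinh2 (t : ℝ) :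
    HasDerivAt (fun x => Real.sinh (2*x)) (2 * Real.cosh (2*t)) t := by
  have h2x : HasDerivAt (fun x : ℝ => 2*x) 2 t := by
    simpa using (hasDerivAt_id t).const_mul 2
  have h := (Real.hasDerivAt_sinh (2*t)).comp t h2x
  exact h.congr_deriv (by ring)

lemma hasDerivAt_cosh2 (t : ℝ) :
    HasDerivAt (fun x => Real.cosh (2*x)) (2 * Real.sinh (2*t)) t := by
  have h2x : HasDerivAt (fun x : ℝ => 2*x) 2 t := by
    simpa using (hasDerivAt_id t).const_mul 2
  have h := (Real.hasDerivAt_cosh (2*t)).comp t h2x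
  exact h.congr_deriv (by ring)

lemma hasDerivAt_FS (a b d t : ℝ) :
    HasDerivAt (FS a b d) (FC (a+d) (2*b) 0 d t) t := by
  have h1 := (Real.hasDerivAt_sinh t).const_mul a
  have h2 := (hasDerivAt_sinh2 t).const_mul b
  have h3 : HasDerivAt (fun x : ℝ => x * Real.cosh x)
      (Real.cosh t + t * Real.sinh t) t := by
    exact ((hasDerivAt_id t).mul (Real.hasDerivAt_cosh t)).congr_deriv (by simp)
  have h := (h1.add h2).add (h3.const_mul d)
  have he : FC (a+d) (2*b) 0 d t
      = a * Real.cosh t + b * (2 * Real.cosh (2*t)) + d * (Real.cosh t + t * Real.sinh t) := by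
    unfold FC; ring
  rw [he]
  exact h

lemma hasDerivAt_FC (a b c d t : ℝ) :
    HasDerivAt (FC a b c d) (FS (a+d) (2*b) d t) t := by
  have h1 := (Real.hasDerivAt_cosh t).const_mul a
  have h2 := (hasDerivAt_cosh2 t).const_mul b
  have h3 : HasDerivAt (fun x : ℝ => x * Real.sinh x)
      (Real.sinh t + t * Real.cosh t) t := by
    exact ((hasDerivAt_id t).mul (Real.hasDerivAt_sinh t)).congr_deriv (by simp)
  have h := (((h1.add h2).add (hasDerivAt_const t c)).add (h3.const_mul d))
  have he : FS (a+d) (2*b) d t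
      = a * Real.sinh t + b * (2 * Real.sinh (2*t)) + 0 + d * (Real.sinh t + t * Real.cosh t) := by
    unfold FS; ring
  rw [he]
  exact h

lemma pos_on (f f' : ℝ → ℝ) (hf : ∀ x, HasDerivAt f (f' x) x) (h0 : f 0 = 0)
    (hpos : ∀ x, 0 < x → 0 < f' x) : ∀ x, 0 < x → 0 < f x := by
  intro x hx
  have hmono : StrictMonoOn f (Set.Ici (0:ℝ)) := by
    refine strictMonoOn_of_deriv_pos (convex_Ici 0)
      (fun y _ => (hf y).differentiableAt.continuousAt.continuousWithinAt) ?_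
    intro y hy
    rw [interior_Ici] at hy
    rw [(hf y).deriv]
    exact hpos y hy
  have := hmono Set.self_mem_Ici (Set.mem_Ici.mpr hx.le) hx
  rwa [h0] at this

lemma chain_pos (a b d C : ℝ) (h1 : a + d + 2*b + C = 0) (h3 : a + 3*d + 8*b = 0)
    (htop : ∀ t, 0 < t → 0 < FC (a+5*d) (32*b) 0 d t) :
    ∀ t, 0 < t → 0 < FS a b d t + C*t := by
  have H4 : ∀ t, 0 < t → 0 < FS (a+4*d) (16*b) d t := by
    refine pos_on _ _ (fun t => hasDerivAt_FS (a+4*d) (16*b) d t) (by unfold FS; simp) ?_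
    intro t ht
    have he : FC ((a+4*d)+d) (2*(16*b)) 0 d t = FC (a+5*d) (32*b) 0 d t := by
      unfold FC; ring
    rw [he]; exact htop t ht
  have H3 : ∀ t, 0 < t → 0 < FC (a+3*d) (8*b) 0 d t := by
    refine pos_on _ _ (fun t => hasDerivAt_FC (a+3*d) (8*b) 0 d t)
      (by unfold FC; simp; linarith) ?_
    intro t ht
    have he : FS ((a+3*d)+d) (2*(8*b)) d t = FS (a+4*d) (16*b) d t := by
      unfold FS; ring
    rw [he]; exact H4 t ht
  have H2 : ∀ t, 0 < t → 0 < FS (a+2*d) (4*b) d t := by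
    refine pos_on _ _ (fun t => hasDerivAt_FS (a+2*d) (4*b) d t) (by unfold FS; simp) ?_
    intro t ht
    have he : FC ((a+2*d)+d) (2*(4*b)) 0 d t = FC (a+3*d) (8*b) 0 d t := by
      unfold FC; ring
    rw [he]; exact H3 t ht
  have H1 : ∀ t, 0 < t → 0 < FC (a+d) (2*b) C d t := by
    refine pos_on _ _ (fun t => hasDerivAt_FC (a+d) (2*b) C d t)
      (by unfold FC; simp; linarith) ?_
    intro t ht
    have he : FS ((a+d)+d) (2*(2*b)) d t = FS (a+2*d) (4*b) d t := by
      unfold FS; ring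
    rw [he]; exact H2 t ht
  refine pos_on _ _
    (fun t => (hasDerivAt_FS a b d t).add ((hasDerivAt_id t).const_mul C))
    (by unfold FS; simp) ?_
  intro t ht
  have he : FC (a+d) (2*b) 0 d t + C * 1 = FC (a+d) (2*b) C d t := by
    unfold FC; ring
  rw [he]; exact H1 t ht

noncomputable def Gval (p t : ℝ) : ℝ :=
  (3+p) * Real.sinh t + p * Real.sinh (2*t) - 2*t - (1+3*p) * (t * Real.cosh t)

lemma ts_bounds (t : ℝ) (ht : 0 < t) :
    0 < t * Real.sinh t ∧ t * Real.sinh t ≤ Real.cosh t ^ 2 - 1 := by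
  have h1 : t < Real.sinh t := Real.self_lt_sinh_iff.mpr ht
  have h2 : 0 < Real.sinh t := lt_trans ht h1
  have h3 := Real.sinh_sq t
  constructor
  · exact mul_pos ht h2
  · nlinarith

lemma cosh2_eq (t : ℝ) : Real.cosh (2*t) = 2 * Real.cosh t ^ 2 - 1 := by
  rw [Real.cosh_two_mul, Real.sinh_sq]; ring

lemma top_pos_right (p : ℝ) (hp : 1/9 ≤ p) :
    ∀ t, 0 < t → 0 < FC ((3+p)+5*(-(1+3*p))) (32*p) 0 (-(1+3*p)) t := by
  intro t ht
  have hc : 1 < Real.cosh t := Real.one_lt_cosh.mpr (ne_of_gt ht)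
  obtain ⟨hts0, hts1⟩ := ts_bounds t ht
  unfold FC
  rw [cosh2_eq]
  nlinarith [mul_nonneg (by linarith : (0:ℝ) ≤ 1+3*p)
      (by linarith : (0:ℝ) ≤ Real.cosh t ^2 - 1 - t * Real.sinh t),
    mul_pos (by linarith : (0:ℝ) < Real.cosh t - 1) (by linarith : (0:ℝ) < 13*Real.cosh t + 5),
    mul_nonneg (by linarith : (0:ℝ) ≤ p - 1/9)
      (by nlinarith : (0:ℝ) ≤ 61*Real.cosh t^2 - 14*Real.cosh t - 29)]

lemma top_pos_left (p : ℝ) (hp : p ≤ 0) :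
    ∀ t, 0 < t → 0 < FC ((-(3+p))+5*(1+3*p)) (32*(-p)) 0 (1+3*p) t := by
  intro t ht
  have hc : 1 < Real.cosh t := Real.one_lt_cosh.mpr (ne_of_gt ht)
  obtain ⟨hts0, hts1⟩ := ts_bounds t ht
  unfold FC
  rw [cosh2_eq]
  rcases le_or_gt 0 (1+3*p) with h | h
  · nlinarith [mul_nonneg (by linarith : (0:ℝ) ≤ -p)
        (by nlinarith : (0:ℝ) ≤ 64*Real.cosh t^2 - 14*Real.cosh t - 32),
      mul_nonneg h hts0.le]
  · nlinarith [mul_nonneg (by linarith : (0:ℝ) ≤ -p)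
        (by nlinarith : (0:ℝ) ≤ 61*Real.cosh t^2 - 14*Real.cosh t - 29),
      mul_nonneg (by linarith : (0:ℝ) ≤ -(1+3*p))
        (by linarith : (0:ℝ) ≤ Real.cosh t ^2 - 1 - t * Real.sinh t),
      sq_nonneg (Real.cosh t + 1)]

lemma G_pos (p : ℝ) (hp : 1/9 ≤ p) {t : ℝ} (ht : 0 < t) : 0 < Gval p t := by
  have h := chain_pos (3+p) p (-(1+3*p)) (-2) (by ring) (by ring) (top_pos_right p hp) t ht
  have he : Gval p t = FS (3+p) p (-(1+3*p)) t + (-2)*t := by unfold Gval FS; ring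
  rw [he]; exact h

lemma G_neg (p : ℝ) (hp : p ≤ 0) {t : ℝ} (ht : 0 < t) : Gval p t < 0 := by
  have h := chain_pos (-(3+p)) (-p) (1+3*p) 2 (by ring) (by ring) (top_pos_left p hp) t ht
  have he : Gval p t = -(FS (-(3+p)) (-p) (1+3*p) t + 2*t) := by unfold Gval FS; ring
  rw [he]; linarith

lemma frac_diff (p t : ℝ) (ht : t ≠ 0) (hD : 3 + p + 2*p*Real.cosh t ≠ 0) :
    Real.sinh t / t - (2 + (1+3*p)*Real.cosh t)/(3 + p + 2*p*Real.cosh t)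
      = Gval p t / (t * (3 + p + 2*p*Real.cosh t)) := by
  unfold Gval
  rw [Real.sinh_two_mul]
  field_simp
  ring

lemma sinh_taylor {x : ℝ} (hx : |x| ≤ 1) :
    |Real.sinh x - (x + x^3/6 + x^5/120)| ≤ |x|^7/4410 := by
  have h1 := Real.exp_bound hx (by norm_num : 0 < 7)
  have h2 := Real.exp_bound (x := -x) (by rwa [abs_neg]) (by norm_num : 0 < 7)
  rw [abs_neg] at h2
  set Sx := ∑ m ∈ Finset.range 7, x^m / m.factorial with hSx
  set Sy := ∑ m ∈ Finset.range 7, (-x)^m / m.factorial with hSy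
  have hS : Sx - Sy = 2*(x + x^3/6 + x^5/120) := by
    rw [hSx, hSy]
    simp [Finset.sum_range_succ, Nat.factorial]
    ring
  have hval : Real.sinh x - (x + x^3/6 + x^5/120)
      = ((Real.exp x - Sx) - (Real.exp (-x) - Sy)) / 2 := by
    rw [Real.sinh_eq]; linarith
  have h1' := h1.trans_eq (by norm_num [Nat.factorial]; ring :
    |x|^7 * (((7:ℕ).succ : ℝ) / (((7:ℕ).factorial : ℝ) * (7:ℕ))) = |x|^7/4410)
  have h2' := h2.trans_eq (by norm_num [Nat.factorial]; ring :
    |x|^7 * (((7:ℕ).succ : ℝ) / (((7:ℕ).factorial : ℝ) * (7:ℕ))) = |x|^7/4410)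
  obtain ⟨ha1, ha2⟩ := abs_le.mp h1'
  obtain ⟨hb1, hb2⟩ := abs_le.mp h2' 
  rw [hval]
  rw [abs_le]
  constructor <;> [linarith; linarith]

lemma cosh_taylor {x : ℝ} (hx : |x| ≤ 1) :
    |Real.cosh x - (1 + x^2/2 + x^4/24 + x^6/720)| ≤ |x|^7/4410 := by
  have h1 := Real.exp_bound hx (by norm_num : 0 < 7)
  have h2 := Real.exp_bound (x := -x) (by rwa [abs_neg]) (by norm_num : 0 < 7)
  rw [abs_neg] at h2
  set Sx := ∑ m ∈ Finset.range 7, x^m / m.factorial with hSx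
  set Sy := ∑ m ∈ Finset.range 7, (-x)^m / m.factorial with hSy
  have hS : Sx + Sy = 2*(1 + x^2/2 + x^4/24 + x^6/720) := by
    rw [hSx, hSy]
    simp [Finset.sum_range_succ, Nat.factorial]
    ring
  have hval : Real.cosh x - (1 + x^2/2 + x^4/24 + x^6/720)
      = ((Real.exp x - Sx) + (Real.exp (-x) - Sy)) / 2 := by
    rw [Real.cosh_eq]; linarith
  have h1' := h1.trans_eq (by norm_num [Nat.factorial]; ring :
    |x|^7 * (((7:ℕ).succ : ℝ) / (((7:ℕ).factorial : ℝ) * (7:ℕ))) = |x|^7/4410)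
  have h2' := h2.trans_eq (by norm_num [Nat.factorial]; ring :
    |x|^7 * (((7:ℕ).succ : ℝ) / (((7:ℕ).factorial : ℝ) * (7:ℕ))) = |x|^7/4410)
  obtain ⟨ha1, ha2⟩ := abs_le.mp h1'
  obtain ⟨hb1, hb2⟩ := abs_le.mp h2' 
  rw [hval]
  rw [abs_le]
  constructor <;> [linarith; linarith]

set_option maxHeartbeats 1000000 in
lemma G_neg_small (p : ℝ) (hp0 : 0 ≤ p) (hp1 : p < 1/9) :
    ∃ t : ℝ, 0 < t ∧ Gval p t < 0 := by
  set t := Real.sqrt ((1-9*p)/10) with htdef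
  have hq0 : (0:ℝ) < (1-9*p)/10 := by linarith
  have ht2 : t^2 = (1-9*p)/10 := Real.sq_sqrt hq0.le
  have ht0 : 0 < t := Real.sqrt_pos.mpr hq0
  have ht2' : t^2 ≤ 1/10 := by rw [ht2]; linarith
  have ht1 : t ≤ 1 := by nlinarith
  have h2t : |2*t| ≤ 1 := by
    rw [abs_of_pos (by linarith)]
    nlinarith
  have hs1 := sinh_taylor (x := t) (by rw [abs_of_pos ht0]; exact ht1)
  have hs2 := sinh_taylor (x := 2*t) h2t
  have hc1 := cosh_taylor (x := t) (by rw [abs_of_pos ht0]; exact ht1)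
  rw [abs_of_pos ht0] at hs1 hc1
  rw [abs_of_pos (by linarith : (0:ℝ) < 2*t)] at hs2
  obtain ⟨hA1, hA2⟩ := abs_le.mp hs1
  obtain ⟨hB1, hB2⟩ := abs_le.mp hs2
  obtain ⟨hC1, hC2⟩ := abs_le.mp hc1
  refine ⟨t, ht0, ?_⟩
  have hsu : Real.sinh t ≤ t + t^3/6 + t^5/120 + t^7/4410 := by linarith
  have hsu2 : Real.sinh (2*t) ≤ 2*t + 8*t^3/6 + 32*t^5/120 + 128*t^7/4410 := by
    have h : (2*t)^7/4410 = 128*t^7/4410 := by ring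
    have h2 : (2*t) + (2*t)^3/6 + (2*t)^5/120 = 2*t + 8*t^3/6 + 32*t^5/120 := by ring
    linarith [h.le, h2.le]
  have hcl : 1 + t^2/2 + t^4/24 + t^6/720 - t^7/4410 ≤ Real.cosh t := by linarith
  have hkey1 : (3+p) * Real.sinh t ≤ (3+p) * (t + t^3/6 + t^5/120 + t^7/4410) :=
    mul_le_mul_of_nonneg_left hsu (by linarith)
  have hkey2 : p * Real.sinh (2*t) ≤ p * (2*t + 8*t^3/6 + 32*t^5/120 + 128*t^7/4410) :=
    mul_le_mul_of_nonneg_left hsu2 hp0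
  have hkey3 : (1+3*p) * (t * (1 + t^2/2 + t^4/24 + t^6/720 - t^7/4410))
      ≤ (1+3*p) * (t * Real.cosh t) :=
    mul_le_mul_of_nonneg_left (mul_le_mul_of_nonneg_left hcl ht0.le) (by linarith)
  have hpe : p = (1-10*t^2)/9 := by rw [ht2]; ring
  have hQ : (3+p)*(t + t^3/6 + t^5/120 + t^7/4410)
      + p*(2*t + 8*t^3/6 + 32*t^5/120 + 128*t^7/4410) - 2*t
      - (1+3*p)*(t*(1 + t^2/2 + t^4/24 + t^6/720 - t^7/4410)) < 0 := by
    rw [hpe]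
    have hfact : (3+(1-10*t^2)/9)*(t + t^3/6 + t^5/120 + t^7/4410)
        + ((1-10*t^2)/9)*(2*t + 8*t^3/6 + 32*t^5/120 + 128*t^7/4410) - 2*t
        - (1+3*((1-10*t^2)/9))*(t*(1 + t^2/2 + t^4/24 + t^6/720 - t^7/4410))
        = -(871/5292)*t^7 + (2/6615)*t^8 - (295/10584)*t^9 - (1/1323)*t^10 := by
      ring
    rw [hfact]
    have h87 : t^8 ≤ t^7 := pow_le_pow_of_le_one ht0.le ht1 (by norm_num)
    linarith [pow_pos ht0 7, pow_nonneg ht0.le 9, pow_nonneg ht0.le 10, h87]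
  unfold Gval
  linarith

lemma G_nonneg_large (p : ℝ) (hp : 0 < p) :
    ∃ t : ℝ, 0 < t ∧ 0 ≤ Gval p t := by
  set t := (12+12*p)/p with htdef
  have ht0 : 0 < t := by positivity
  refine ⟨t, ht0, ?_⟩
  have hpt : p * t = 12 + 12*p := by
    rw [htdef]; field_simp
  have hexp : 1 + t/2 ≤ Real.exp (t/2) := by linarith [Real.add_one_le_exp (t/2)]
  have hexp2 : (1 + t/2)^2 ≤ Real.exp t := by
    have h : Real.exp t = Real.exp (t/2) * Real.exp (t/2) := by
      rw [← Real.exp_add]; ring_nf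
    rw [h]
    have h0 : (0:ℝ) ≤ 1 + t/2 := by linarith
    nlinarith
  have hexpneg : Real.exp (-t) ≤ 1 := Real.exp_le_one_iff.mpr (by linarith)
  have hsl : t/2 + t^2/8 ≤ Real.sinh t := by
    rw [Real.sinh_eq]
    nlinarith
  have hc1 : 1 ≤ Real.cosh t := Real.one_le_cosh t
  have hs0 : 0 < Real.sinh t := Real.sinh_pos_iff.mpr ht0
  have hkey : (3+3*p) * t ≤ 2*p*Real.sinh t := by nlinarith
  unfold Gval
  rw [Real.sinh_two_mul]
  nlinarith [mul_nonneg (by linarith : (0:ℝ) ≤ Real.cosh t)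
      (by linarith : (0:ℝ) ≤ 2*p*Real.sinh t - (3+3*p)*t),
    mul_nonneg (by linarith : (0:ℝ) ≤ Real.cosh t - 1) ht0.le,
    mul_pos (by linarith : (0:ℝ) < 3+p) hs0]

theorem stmt16 (p : ℝ) (hp : p ≤ -1 ∨ 0 ≤ p) :
    ((∀ t : ℝ, 0 < t →
      (2 + (1+3*p)*Real.cosh t) / (3 + p + 2*p*Real.cosh t) < Real.sinh t / t) ↔
      (p ≤ -1 ∨ 1/9 ≤ p)) ∧
    ((∀ t : ℝ, 0 < t →
      Real.sinh t / t < (2 + (1+3*p)*Real.cosh t) / (3 + p + 2*p*Real.cosh t)) ↔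
      p = 0) := by
  constructor
  · constructor
    · intro H
      by_contra hcon
      push_neg at hcon
      obtain ⟨h1, h2⟩ := hcon
      have hp0 : 0 ≤ p := hp.resolve_left (by linarith)
      obtain ⟨t, ht, hG⟩ := G_neg_small p hp0 h2
      have hD : 0 < 3 + p + 2*p*Real.cosh t := by
        nlinarith [Real.one_le_cosh t]
      have hdiff := frac_diff p t ht.ne' hD.ne'
      have hlt := H t ht
      have hgt : 0 < Gval p t / (t * (3 + p + 2*p*Real.cosh t)) := by
        rw [← hdiff]; linarith
      have hneg : Gval p t / (t * (3 + p + 2*p*Real.cosh t)) < 0 :=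
        div_neg_of_neg_of_pos hG (by positivity)
      linarith
    · rintro (h | h) t ht
      · have hc : 1 < Real.cosh t := Real.one_lt_cosh.mpr ht.ne'
        have hD : 3 + p + 2*p*Real.cosh t < 0 := by nlinarith
        have hG := G_neg p (by linarith) ht
        have hdiff := frac_diff p t ht.ne' hD.ne
        have hpos : 0 < Gval p t / (t * (3 + p + 2*p*Real.cosh t)) :=
          div_pos_of_neg_of_neg hG (mul_neg_of_pos_of_neg ht hD)
        linarith
      · have hp0 : (0:ℝ) ≤ p := by linarith
        have hD : 0 < 3 + p + 2*p*Real.cosh t := by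
          nlinarith [Real.one_le_cosh t]
        have hG := G_pos p h ht
        have hdiff := frac_diff p t ht.ne' hD.ne'
        have hpos : 0 < Gval p t / (t * (3 + p + 2*p*Real.cosh t)) :=
          div_pos hG (by positivity)
        linarith
  · constructor
    · intro H
      by_contra hne
      rcases hp with h | h
      · have hc : 1 < Real.cosh 1 := Real.one_lt_cosh.mpr one_ne_zero
        have hD : 3 + p + 2*p*Real.cosh 1 < 0 := by nlinarith
        have hG := G_neg p (by linarith) (one_pos)
        have hdiff := frac_diff p 1 one_ne_zero hD.ne
        have hpos : 0 < Gval p 1 / (1 * (3 + p + 2*p*Real.cosh 1)) :=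
          div_pos_of_neg_of_neg hG (mul_neg_of_pos_of_neg one_pos hD)
        have := H 1 one_pos
        linarith
      · have hppos : 0 < p := lt_of_le_of_ne h (Ne.symm hne)
        obtain ⟨t, ht, hG⟩ := G_nonneg_large p hppos
        have hD : 0 < 3 + p + 2*p*Real.cosh t := by
          nlinarith [Real.one_le_cosh t]
        have hdiff := frac_diff p t ht.ne' hD.ne'
        have hpos : 0 ≤ Gval p t / (t * (3 + p + 2*p*Real.cosh t)) :=
          div_nonneg hG (by positivity)
        have := H t ht
        linarith
    · intro h
      subst h
      intro t ht
      have hD : 0 < 3 + (0:ℝ) + 2*0*Real.cosh t := by norm_num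
      have hG := G_neg 0 le_rfl ht
      have hdiff := frac_diff 0 t ht.ne' hD.ne'
      have hneg : Gval 0 t / (t * (3 + 0 + 2*0*Real.cosh t)) < 0 :=
        div_neg_of_neg_of_pos hG (by positivity)
      linarith
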